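/- Let n be an even positive integer. The number of even indices m with 0 ≤ m < n/2 such that C(n,m) is odd equals 2^{s(n)-1}, where s(n) is the number of 1's in the binary expansion of n. -/

import Mathlib

open Finset

private lemma lucas2 (n m : ℕ) :
    Odd (n.choose m) ↔ Odd ((n % 2).choose (m % 2)) ∧ Odd ((n / 2).choose (m / 2)) := by
  have h := @Choose.choose_modEq_choose_mod_mul_choose_div_nat n m 2 ⟨Nat.prime_two⟩
  rw [Nat.ModEq] at h
  rw [Nat.odd_iff, h, ← Nat.odd_iff, Nat.odd_mul]

private lemma total_count : ∀ n : ℕ,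
    ((Finset.range (n + 1)).filter (fun m => Odd (n.choose m))).card =
      2 ^ ((Nat.digits 2 n).count 1 : ℕ) := by
  intro n
  induction n using Nat.strong_induction_on with
  | _ n ih =>
    rcases Nat.eq_zero_or_pos n with rfl | hn
    · rw [Finset.range_one, Finset.filter_singleton]
      simp
    · have hq : n / 2 < n := Nat.div_lt_self hn one_lt_two
      have key : ((Finset.range (n + 1)).filter (fun m => Odd (n.choose m))).card =
          (((Finset.range (n % 2 + 1)).filter (fun b => Odd ((n % 2).choose b))) ×ˢ
           ((Finset.range (n / 2 + 1)).filter (fun j => Odd ((n / 2).choose j)))).card := by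
        apply Finset.card_nbij' (fun m => (m % 2, m / 2)) (fun p => p.1 + 2 * p.2)
        · intro m hm
          simp only [mem_coe, mem_filter, mem_range] at hm
          obtain ⟨hmn, hodd⟩ := hm
          rw [lucas2] at hodd
          simp only [mem_coe, mem_product, mem_filter, mem_range]
          refine ⟨⟨?_, hodd.1⟩, ⟨?_, hodd.2⟩⟩
          · by_contra h
            push_neg at h
            have := hodd.1
            rw [Nat.choose_eq_zero_of_lt (by omega)] at this
            exact (Nat.not_odd_iff_even.mpr Even.zero) this
          · by_contra h
            push_neg at h
            have := hodd.2
            rw [Nat.choose_eq_zero_of_lt (by omega)] at this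
            exact (Nat.not_odd_iff_even.mpr Even.zero) this
        · intro p hp
          simp only [mem_coe, mem_product, mem_filter, mem_range] at hp
          obtain ⟨⟨hb, hob⟩, ⟨hj, hoj⟩⟩ := hp
          have hr : n % 2 < 2 := Nat.mod_lt _ two_pos
          have hmd : n % 2 + 2 * (n / 2) = n := by omega
          simp only [mem_coe, mem_filter, mem_range]
          constructor
          · omega
          · rw [lucas2]
            have h1 : (p.1 + 2 * p.2) % 2 = p.1 := by omega
            have h2 : (p.1 + 2 * p.2) / 2 = p.2 := by omega
            rw [h1, h2]
            exact ⟨hob, hoj⟩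
        · intro m hm
          simp only [mem_coe, mem_filter, mem_range] at hm
          dsimp only
          omega
        · intro p hp
          simp only [mem_coe, mem_product, mem_filter, mem_range] at hp
          have hr : n % 2 < 2 := Nat.mod_lt _ two_pos
          have h1 : (p.1 + 2 * p.2) % 2 = p.1 := by omega
          have h2 : (p.1 + 2 * p.2) / 2 = p.2 := by omega
          simp [h1, h2]
      rw [key, Finset.card_product, ih (n / 2) hq,
        Nat.digits_def' (by norm_num) hn, List.count_cons]
      have c0 : ((Finset.range (0 + 1)).filter (fun b => Odd (Nat.choose 0 b))).card = 1 := by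
        rw [Finset.range_one, Finset.filter_singleton]
        simp
      have c1 : ((Finset.range (1 + 1)).filter (fun b => Odd (Nat.choose 1 b))).card = 2 := by
        rw [show Finset.range (1 + 1) = {0, 1} from rfl]
        rw [Finset.filter_insert, Finset.filter_singleton]
        simp [Nat.odd_iff]
      rcases Nat.mod_two_eq_zero_or_one n with h | h <;> rw [h]
      · rw [c0]; simp
      · rw [c1]; simp [pow_succ, mul_comm]

private lemma even_central (q : ℕ) (hq : 0 < q) : Even ((2 * q).choose q) := by
  obtain ⟨k, rfl⟩ := Nat.exists_eq_succ_of_ne_zero hq.ne'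
  have h1 : 2 * (k + 1) = (2 * k + 1) + 1 := by ring
  rw [h1, Nat.choose_succ_succ']
  have h2 : (2 * k + 1).choose (k + 1) = (2 * k + 1).choose k := by
    have := Nat.choose_symm (n := 2 * k + 1) (k := k) (by omega)
    rw [show 2 * k + 1 - k = k + 1 by omega] at this
    exact this
  rw [h2]
  exact Even.add_self _

/-- For `n` even and positive, the number of even `m < n/2` with `C(n,m)` odd is
`2 ^ (s(n) - 1)`, where `s(n)` is the number of ones in the binary expansion of `n`. -/
theorem card_odd_binom_even_index (n : ℕ) (hn : Even n) (hpos : 0 < n) :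
    ((Finset.range (n / 2)).filter (fun m => Even m ∧ Odd (n.choose m))).card =
      2 ^ ((Nat.digits 2 n).count 1 - 1) := by
  have hn2 : n % 2 = 0 := Nat.even_iff.mp hn
  set h := n / 2 with hh
  have hn2h : n = 2 * h := by omega
  have hhpos : 0 < h := by omega
  -- all odd-choose indices are even
  have heven : ∀ m, Odd (n.choose m) → Even m := by
    intro m hm
    rw [lucas2, hn2] at hm
    rcases Nat.even_or_odd m with he | ho
    · exact he
    · rw [Nat.odd_iff.mp ho] at hm
      simp [Nat.choose_eq_zero_of_lt] at hm
  -- the target set equals the plain odd-choose filter on range h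
  have hB : (Finset.range h).filter (fun m => Even m ∧ Odd (n.choose m)) =
      (Finset.range h).filter (fun m => Odd (n.choose m)) := by
    apply Finset.filter_congr
    intro m _
    exact ⟨fun ⟨_, h2⟩ => h2, fun h2 => ⟨heven m h2, h2⟩⟩
  set A := (Finset.range (n + 1)).filter (fun m => Odd (n.choose m)) with hA
  set B := (Finset.range h).filter (fun m => Odd (n.choose m)) with hBdef
  -- n/2 is not in A
  have hmid : ¬ Odd (n.choose h) := by
    rw [Nat.not_odd_iff_even, hn2h]
    exact even_central h hhpos
  -- A splits into two halves of equal size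
  have hsplit : (A.filter (fun m => m < h)).card + (A.filter (fun m => ¬ m < h)).card
      = A.card := Finset.card_filter_add_card_filter_not _
  have hlow : A.filter (fun m => m < h) = B := by
    ext m
    simp only [hA, hBdef, Finset.mem_filter, Finset.mem_range]
    constructor
    · rintro ⟨⟨_, ho⟩, hlt⟩; exact ⟨hlt, ho⟩
    · rintro ⟨hlt, ho⟩; exact ⟨⟨by omega, ho⟩, hlt⟩
  have hhigh : (A.filter (fun m => ¬ m < h)).card = B.card := by
    apply Finset.card_nbij' (fun m => n - m) (fun m => n - m)
    · intro m hm
      simp only [hA, hBdef, Finset.mem_coe, Finset.mem_filter, Finset.mem_range] at hm ⊢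
      obtain ⟨⟨hmn, ho⟩, hge⟩ := hm
      have hne : m ≠ h := fun e => hmid (e ▸ ho)
      have hmn' : m ≤ n := by omega
      refine ⟨by omega, ?_⟩
      rwa [Nat.choose_symm hmn']
    · intro m hm
      simp only [hA, hBdef, Finset.mem_coe, Finset.mem_filter, Finset.mem_range] at hm ⊢
      obtain ⟨hlt, ho⟩ := hm
      have hmn' : m ≤ n := by omega
      constructor
      · constructor
        · omega
        · have := Nat.choose_symm hmn'
          rwa [this]
      · omega
    · intro m hm
      simp only [hA, Finset.mem_coe, Finset.mem_filter, Finset.mem_range] at hm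
      dsimp only
      omega
    · intro m hm
      simp only [hBdef, Finset.mem_coe, Finset.mem_filter, Finset.mem_range] at hm
      dsimp only
      omega
  have hAcard : A.card = 2 ^ ((Nat.digits 2 n).count 1 : ℕ) := total_count n
  -- s(n) ≥ 1
  have hs1 : 1 ≤ (Nat.digits 2 n).count 1 := by
    have hne : Nat.digits 2 n ≠ [] := Nat.digits_ne_nil_iff_ne_zero.mpr hpos.ne'
    have hmem : (Nat.digits 2 n).getLast hne ∈ Nat.digits 2 n := List.getLast_mem hne
    have hlt : (Nat.digits 2 n).getLast hne < 2 := Nat.digits_lt_base (by norm_num) hmem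
    have hnz : (Nat.digits 2 n).getLast hne ≠ 0 := Nat.getLast_digit_ne_zero 2 hpos.ne'
    have h1 : (Nat.digits 2 n).getLast hne = 1 := by omega
    have : (1 : ℕ) ∈ Nat.digits 2 n := h1 ▸ hmem
    exact List.count_pos_iff.mpr this
  have : 2 * B.card = 2 ^ ((Nat.digits 2 n).count 1 : ℕ) := by
    rw [← hAcard, ← hsplit, hlow, hhigh]; ring
  rw [hB]
  have hpow : (2 : ℕ) ^ ((Nat.digits 2 n).count 1 : ℕ) =
      2 * 2 ^ ((Nat.digits 2 n).count 1 - 1) := by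
    rw [← pow_succ']
    congr 1
    omega
  omega
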